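/- Nesterov's accelerated gradient method on a convex L-smooth function F with θ_{t-1} := (t+1)/2 achieves F(w^t) - F(w⋆) ≤ 2L‖w^0 - w⋆‖²/(t+1)² for all t ≥ 1. -/

import Mathlib

open Set InnerProductSpace

variable {E : Type*} [NormedAddCommGroup E] [InnerProductSpace ℝ E] [CompleteSpace E]

lemma nesterov_line_hasDerivAt (F : E → ℝ) (hdiff : Differentiable ℝ F) (x v : E) (s : ℝ) :
    HasDerivAt (fun r : ℝ => F (x + r • v)) ⟪gradient F (x + s • v), v⟫_ℝ s := by
  have h1 : HasDerivAt (fun r : ℝ => x + r • v) v s := by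
    simpa using ((hasDerivAt_id s).smul_const v).const_add x
  have h2 := (hdiff (x + s • v)).hasGradientAt.hasFDerivAt
  have := h2.comp_hasDerivAt s h1
  simpa [Function.comp_def] using this

lemma nesterov_convex_lower (F : E → ℝ) (hdiff : Differentiable ℝ F)
    (hconv : ConvexOn ℝ Set.univ F) (x y : E) :
    F x + ⟪gradient F x, y - x⟫_ℝ ≤ F y := by
  set v := y - x with hv
  have hg : ConvexOn ℝ Set.univ (fun s : ℝ => F (x + s • v)) := by
    have h0 := hconv.comp_affineMap (AffineMap.lineMap x y)
    have hfun : (fun s : ℝ => F (x + s • v)) = F ∘ (AffineMap.lineMap x y) := by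
      funext s
      simp only [Function.comp_apply, AffineMap.lineMap_apply_module, hv]
      congr 1
      module
    rw [hfun]
    simpa using h0
  have hs := hg.le_slope_of_hasDerivAt (mem_univ (0:ℝ)) (mem_univ (1:ℝ)) zero_lt_one
    (nesterov_line_hasDerivAt F hdiff x v 0)
  simp only [slope_def_field, zero_smul, add_zero, one_smul, sub_zero, div_one] at hs
  have hxy : x + v = y := by rw [hv]; abel
  rw [hxy] at hs
  linarith

lemma nesterov_descent (F : E → ℝ) (L : ℝ) (hL : 0 < L) (hdiff : Differentiable ℝ F)
    (hlip : ∀ w w' : E, ‖gradient F w - gradient F w'‖ ≤ L * ‖w - w'‖) (x v : E) :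
    F (x + v) ≤ F x + ⟪gradient F x, v⟫_ℝ + L / 2 * ‖v‖ ^ 2 := by
  set h : ℝ → ℝ := fun s => L / 2 * s ^ 2 * ‖v‖ ^ 2 + s * ⟪gradient F x, v⟫_ℝ - F (x + s • v)
    with hh
  have hderiv : ∀ s : ℝ, HasDerivAt h
      (L * s * ‖v‖ ^ 2 + ⟪gradient F x, v⟫_ℝ - ⟪gradient F (x + s • v), v⟫_ℝ) s := by
    intro s
    have hq : HasDerivAt (fun s : ℝ => L / 2 * s ^ 2 * ‖v‖ ^ 2) (L * s * ‖v‖ ^ 2) s := by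
      have := ((hasDerivAt_pow 2 s).const_mul (L / 2)).mul_const (‖v‖ ^ 2)
      exact this.congr_deriv (by ring)
    have hl : HasDerivAt (fun s : ℝ => s * ⟪gradient F x, v⟫_ℝ) ⟪gradient F x, v⟫_ℝ s := by
      simpa using (hasDerivAt_id s).mul_const (⟪gradient F x, v⟫_ℝ)
    exact (hq.add hl).sub (nesterov_line_hasDerivAt F hdiff x v s)
  have hmono : MonotoneOn h (Icc (0:ℝ) 1) := by
    apply monotoneOn_of_deriv_nonneg (convex_Icc 0 1)
    · exact fun s _ => (hderiv s).differentiableAt.continuousAt.continuousWithinAt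
    · exact fun s _ => (hderiv s).differentiableAt.differentiableWithinAt
    · intro s hs
      rw [interior_Icc, mem_Ioo] at hs
      rw [(hderiv s).deriv]
      have hb := real_inner_le_norm (gradient F (x + s • v) - gradient F x) v
      rw [inner_sub_left] at hb
      have hl2 := hlip (x + s • v) x
      have he : ‖x + s • v - x‖ = s * ‖v‖ := by
        rw [add_sub_cancel_left, norm_smul, Real.norm_eq_abs, abs_of_pos hs.1]
      rw [he] at hl2
      have := mul_le_mul_of_nonneg_right hl2 (norm_nonneg v)
      nlinarith [norm_nonneg (gradient F (x + s • v) - gradient F x)]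
  have key := hmono (by simp : (0:ℝ) ∈ Icc (0:ℝ) 1) (by simp : (1:ℝ) ∈ Icc (0:ℝ) 1) zero_le_one
  simp only [hh, zero_smul, add_zero, one_smul, zero_pow, mul_zero, zero_mul, one_pow, mul_one,
    zero_add] at key
  linarith

set_option maxHeartbeats 2000000 in
theorem nesterov_accelerated_rate {p : ℕ}
    (F : EuclideanSpace ℝ (Fin p) → ℝ)
    (L : ℝ) (hL : 0 < L) (hdiff : Differentiable ℝ F)
    (hconv : ConvexOn ℝ Set.univ F)
    (hlip : ∀ w w' : EuclideanSpace ℝ (Fin p),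
      ‖gradient F w - gradient F w'‖ ≤ L * ‖w - w'‖)
    (wstar : EuclideanSpace ℝ (Fin p)) (hmin : ∀ z, F wstar ≤ F z)
    (θ : ℕ → ℝ) (hθ : ∀ t : ℕ, θ t = ((t : ℝ) + 2) / 2)
    (w u z : ℕ → EuclideanSpace ℝ (Fin p)) (hinit : w 0 = u 0)
    (hz : ∀ t, z t = (1 - 1 / θ t) • w t + (1 / θ t) • u t)
    (hw : ∀ t, w (t + 1) = z t - (1 / L) • gradient F (z t))
    (hu : ∀ t, u (t + 1) = u t - (θ t / L) • gradient F (z t)) :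
    ∀ t : ℕ, 1 ≤ t →
      F (w t) - F wstar ≤ 2 * L * ‖w 0 - wstar‖ ^ 2 / ((t : ℝ) + 1) ^ 2 := by
  have hθ1 : ∀ t : ℕ, (1:ℝ) ≤ θ t := by
    intro t
    rw [hθ]
    have : (0:ℝ) ≤ (t:ℝ) := Nat.cast_nonneg t
    linarith
  have hθpos : ∀ t : ℕ, (0:ℝ) < θ t := fun t => lt_of_lt_of_le one_pos (hθ1 t)
  have hδ : ∀ t, 0 ≤ F (w t) - F wstar := fun t => sub_nonneg.2 (hmin _)
  -- vector identity
  have hvec : ∀ t, (θ t - 1) • (z t - w t) + (z t - wstar) = u t - wstar := by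
    intro t
    have h0 : θ t ≠ 0 := ne_of_gt (hθpos t)
    have e : θ t * (1 - 1 / θ t) = θ t - 1 := by field_simp
    have e2 : θ t * (1 / θ t) = 1 := by field_simp
    have hzz : θ t • z t = (θ t - 1) • w t + u t := by
      rw [hz t, smul_add, smul_smul, smul_smul, e, e2, one_smul]
    have hr : (θ t - 1) • (z t - w t) + (z t - wstar)
        = θ t • z t - (θ t - 1) • w t - wstar := by module
    rw [hr, hzz]
    abel
  have hinner : ∀ t, (θ t - 1) * ⟪gradient F (z t), z t - w t⟫_ℝ
      + ⟪gradient F (z t), z t - wstar⟫_ℝ = ⟪gradient F (z t), u t - wstar⟫_ℝ := by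
    intro t
    rw [← hvec t, inner_add_right, real_inner_smul_right]
  have hexp : ∀ t, ‖u (t + 1) - wstar‖ ^ 2 = ‖u t - wstar‖ ^ 2
      - 2 * (θ t / L) * ⟪gradient F (z t), u t - wstar⟫_ℝ
      + (θ t / L) ^ 2 * ‖gradient F (z t)‖ ^ 2 := by
    intro t
    have he : u (t + 1) - wstar = (u t - wstar) - (θ t / L) • gradient F (z t) := by
      rw [hu t]; abel
    rw [he, norm_sub_sq_real, real_inner_smul_right, norm_smul, Real.norm_eq_abs,
      abs_of_nonneg (div_nonneg (hθpos t).le hL.le), mul_pow,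
      real_inner_comm]
    ring
  have hd : ∀ t, F (w (t + 1)) ≤ F (z t) - 1 / (2 * L) * ‖gradient F (z t)‖ ^ 2 := by
    intro t
    have hwt : w (t + 1) = z t + (-(1 / L)) • gradient F (z t) := by
      rw [hw t]; module
    rw [hwt]
    have := nesterov_descent F L hL hdiff hlip (z t) ((-(1 / L)) • gradient F (z t))
    rw [real_inner_smul_right, real_inner_self_eq_norm_sq, norm_smul, Real.norm_eq_abs,
      abs_neg, abs_of_nonneg (by positivity : (0:ℝ) ≤ 1 / L), mul_pow] at this
    have hL' : L ≠ 0 := ne_of_gt hL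
    calc F (z t + (-(1 / L)) • gradient F (z t))
        ≤ F (z t) + (-(1 / L)) * ‖gradient F (z t)‖ ^ 2
          + L / 2 * ((1 / L) ^ 2 * ‖gradient F (z t)‖ ^ 2) := this
      _ = F (z t) - 1 / (2 * L) * ‖gradient F (z t)‖ ^ 2 := by field_simp; ring
  -- key per-step inequality
  have key : ∀ t, (θ t) ^ 2 * (F (w (t + 1)) - F wstar) + L / 2 * ‖u (t + 1) - wstar‖ ^ 2
      ≤ θ t * (θ t - 1) * (F (w t) - F wstar) + L / 2 * ‖u t - wstar‖ ^ 2 := by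
    intro t
    have hc1 := nesterov_convex_lower F hdiff hconv (z t) (w t)
    have hc2 := nesterov_convex_lower F hdiff hconv (z t) (wstar)
    have hi1 : ⟪gradient F (z t), w t - z t⟫_ℝ = - ⟪gradient F (z t), z t - w t⟫_ℝ := by
      rw [← inner_neg_right]; congr 1; abel
    have hi2 : ⟪gradient F (z t), wstar - z t⟫_ℝ = - ⟪gradient F (z t), z t - wstar⟫_ℝ := by
      rw [← inner_neg_right]; congr 1; abel
    rw [hi1] at hc1
    rw [hi2] at hc2
    have hdt := hd t
    have het := hexp t
    have hit := hinner t
    have h1 := hθ1 t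
    -- θ * C ≤ (θ-1) A + S + J
    have hC : θ t * F (z t) ≤ (θ t - 1) * F (w t) + F wstar
        + ⟪gradient F (z t), u t - wstar⟫_ℝ := by
      nlinarith [mul_le_mul_of_nonneg_left (by linarith [hc1] : F (z t) ≤ F (w t) + ⟪gradient F (z t), z t - w t⟫_ℝ) (by linarith : (0:ℝ) ≤ θ t - 1)]
    have hG : (0:ℝ) ≤ ‖gradient F (z t)‖ ^ 2 := by positivity
    have hmul := mul_le_mul_of_nonneg_left hdt (by positivity : (0:ℝ) ≤ (θ t) ^ 2)
    have hmul2 := mul_le_mul_of_nonneg_left hC (le_of_lt (hθpos t))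
    rw [het]
    have hLne : L ≠ 0 := ne_of_gt hL
    have e1 : L / 2 * ((θ t / L) ^ 2 * ‖gradient F (z t)‖ ^ 2)
        = (θ t) ^ 2 / (2 * L) * ‖gradient F (z t)‖ ^ 2 := by field_simp
    have expand : L / 2 * (‖u t - wstar‖ ^ 2
        - 2 * (θ t / L) * ⟪gradient F (z t), u t - wstar⟫_ℝ
        + (θ t / L) ^ 2 * ‖gradient F (z t)‖ ^ 2)
        = L / 2 * ‖u t - wstar‖ ^ 2 - θ t * ⟪gradient F (z t), u t - wstar⟫_ℝ
          + θ t ^ 2 * (1 / (2 * L)) * ‖gradient F (z t)‖ ^ 2 := by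
      field_simp
    rw [expand]
    nlinarith [hmul, hmul2]
  -- induction
  have claim : ∀ t : ℕ, (((t:ℝ) + 2) / 2) ^ 2 * (F (w (t + 1)) - F wstar)
      + L / 2 * ‖u (t + 1) - wstar‖ ^ 2 ≤ L / 2 * ‖u 0 - wstar‖ ^ 2 := by
    intro t
    induction t with
    | zero =>
      have := key 0
      rw [hθ 0] at this
      norm_num at this ⊢
      linarith
    | succ s ih =>
      have hk := key (s + 1)
      rw [hθ (s + 1)] at hk
      push_cast at hk ⊢
      have hδ1 := hδ (s + 1)
      nlinarith [hk, ih, hδ1]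
  intro t ht
  obtain ⟨s, rfl⟩ : ∃ s, t = s + 1 := ⟨t - 1, by omega⟩
  have hc := claim s
  have hnorm : ‖u 0 - wstar‖ ^ 2 = ‖w 0 - wstar‖ ^ 2 := by rw [hinit]
  rw [hnorm] at hc
  have hD : ((((s + 1 : ℕ)) : ℝ) + 1) ^ 2 = ((s : ℝ) + 2) ^ 2 := by push_cast; ring
  have hp2 : (0:ℝ) < ((s : ℝ) + 2) ^ 2 := by positivity
  rw [hD, le_div_iff₀ hp2]
  have hnn : (0:ℝ) ≤ ‖u (s + 1) - wstar‖ ^ 2 := by positivity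
  have e4 : (((s:ℝ) + 2) / 2) ^ 2 * (F (w (s + 1)) - F wstar)
      = ((s:ℝ) + 2) ^ 2 * (F (w (s + 1)) - F wstar) / 4 := by ring
  rw [e4] at hc
  linarith [mul_nonneg hL.le hnn]
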